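/- Let Ω ⊆ ℝⁿ be an open set, let F : Ω → ℝⁿ be a map which is Lipschitz on Ω with Lipschitz constant L > 0 (with respect to the Euclidean norm), and let x : ℝ → Ω be a differentiable curve satisfying x'(t) = F(x(t)) for all t ∈ ℝ. If x is periodic with period T > 0 (that is, x(t + T) = x(t) for all t ∈ ℝ) and x is not constant, then T ≥ 2π / L. -/

import Mathlib

open Real MeasureTheory intervalIntegral Set Function
open scoped InnerProductSpace

lemma periodic_lift_continuous {T : ℝ} {f : ℝ → ℂ} (hf : Continuous f)
    (hper : Function.Periodic f T) : Continuous hper.lift := by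
  unfold Function.Periodic.lift
  exact hf.quotient_liftOn' _

lemma fourierCoeff_lift_eq {T : ℝ} [hT : Fact (0 < T)] {f : ℝ → ℂ}
    (hper : Function.Periodic f T) (n : ℤ) :
    fourierCoeff hper.lift n =
      fourierCoeffOn (by linarith [hT.out] : (0:ℝ) < T) f n := by
  rw [fourierCoeff_eq_intervalIntegral _ n 0, fourierCoeffOn_eq_integral]
  rw [zero_add, sub_zero]
  simp only [hper.lift_coe]

lemma wirtinger_scalar {T : ℝ} (hT : 0 < T) {f g : ℝ → ℂ}
    (hder : ∀ t, HasDerivAt f (g t) t) (hg : Continuous g)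
    (hper : ∀ t, f (t + T) = f t)
    (hmean : ∫ t in (0:ℝ)..T, f t = 0) :
    ∫ t in (0:ℝ)..T, ‖f t‖ ^ 2 ≤ (T / (2 * π)) ^ 2 * ∫ t in (0:ℝ)..T, ‖g t‖ ^ 2 := by
  haveI : Fact (0 < T) := ⟨hT⟩
  have hf_cont : Continuous f := by
    apply continuous_iff_continuousAt.2 fun t => (hder t).continuousAt
  -- g is periodic
  have hgper : ∀ t, g (t + T) = g t := by
    intro t
    have h1 : HasDerivAt (fun s => f (s + T)) (g (t + T)) t :=
      (hder (t + T)).comp_add_const t T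
    have h2 : (fun s => f (s + T)) = f := funext hper
    rw [h2] at h1
    exact h1.unique (hder t)
  have hPf : Function.Periodic f T := hper
  have hPg : Function.Periodic g T := hgper
  set Fc : C(AddCircle T, ℂ) := ⟨hPf.lift, periodic_lift_continuous hf_cont hPf⟩ with hFc
  set Gc : C(AddCircle T, ℂ) := ⟨hPg.lift, periodic_lift_continuous hg hPg⟩ with hGc
  have hFcoe : ∀ t : ℝ, Fc t = f t := fun t => hPf.lift_coe t
  have hGcoe : ∀ t : ℝ, Gc t = g t := fun t => hPg.lift_coe t
  -- the zero coefficient of f vanishes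
  have hc0 : fourierCoeff (⇑Fc) 0 = 0 := by
    rw [fourierCoeff_eq_intervalIntegral _ 0 0]
    simp only [neg_zero, fourier_zero, one_smul, zero_add]
    rw [intervalIntegral.integral_congr (g := f) (fun t _ => hFcoe t), hmean, smul_zero]
  -- coefficient comparison
  have hcoeff : ∀ i : ℤ, ‖fourierCoeff (⇑Fc) i‖ ^ 2 ≤
      (T / (2 * π)) ^ 2 * ‖fourierCoeff (⇑Gc) i‖ ^ 2 := by
    intro i
    rcases eq_or_ne i 0 with rfl | hi
    · rw [hc0]
      norm_num
      positivity
    · have key : ‖fourierCoeff (⇑Fc) i‖ ≤ (T / (2 * π)) * ‖fourierCoeff (⇑Gc) i‖ := by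
        have h1 : fourierCoeff (⇑Fc) i = fourierCoeffOn hT f i := fourierCoeff_lift_eq hPf i
        have h2 : fourierCoeff (⇑Gc) i = fourierCoeffOn hT g i := fourierCoeff_lift_eq hPg i
        have h3 := fourierCoeffOn_of_hasDerivAt hT hi
          (f := f) (f' := g) (fun t _ => hder t) (hg.intervalIntegrable 0 T)
        have hfT : f T - f 0 = 0 := by
          have := hper 0
          rw [zero_add] at this
          rw [this, sub_self]
        rw [hfT, mul_zero, zero_sub] at h3
        norm_num at h3
        rw [h1, h2, h3]
        have hnI : ‖((i:ℂ))⁻¹ * (Complex.I * ((π:ℂ)⁻¹ * (1 / 2)))‖ = (2 * π * |(i:ℝ)|)⁻¹ := by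
          simp [abs_of_pos pi_pos, norm_mul]
        have hTn : ‖((T : ℝ) : ℂ)‖ = T := by
          rw [Complex.norm_real, Real.norm_eq_abs, abs_of_pos hT]
        rw [norm_neg, norm_mul, hnI, norm_mul, hTn]
        have hiabs : (1:ℝ) ≤ |(i:ℝ)| := by
          rw [← Int.cast_abs]
          exact_mod_cast Int.one_le_abs hi
        have h4 : (2*π*|(i:ℝ)|)⁻¹ ≤ (2*π)⁻¹ := by
          apply inv_anti₀ (by positivity)
          nlinarith [pi_pos]
        calc (2*π*|(i:ℝ)|)⁻¹ * (T * ‖fourierCoeffOn hT g i‖)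
            ≤ (2*π)⁻¹ * (T * ‖fourierCoeffOn hT g i‖) := by
              apply mul_le_mul_of_nonneg_right h4 (by positivity)
          _ = T / (2*π) * ‖fourierCoeffOn hT g i‖ := by ring
      calc ‖fourierCoeff (⇑Fc) i‖ ^ 2 ≤ ((T / (2 * π)) * ‖fourierCoeff (⇑Gc) i‖) ^ 2 := by
            apply pow_le_pow_left₀ (norm_nonneg _) key
        _ = (T / (2 * π)) ^ 2 * ‖fourierCoeff (⇑Gc) i‖ ^ 2 := by ring
  -- Parseval and summability for a continuous map
  have key2 : ∀ H : C(AddCircle T, ℂ),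
      (∑' i : ℤ, ‖fourierCoeff (⇑H) i‖ ^ 2)
        = (∫ z : AddCircle T, ‖H z‖ ^ 2 ∂AddCircle.haarAddCircle)
      ∧ Summable (fun i : ℤ => ‖fourierCoeff (⇑H) i‖ ^ 2) := by
    intro H
    set H2 := ContinuousMap.toLp (E := ℂ) 2 AddCircle.haarAddCircle ℂ H with hH2
    have hco : ∀ i : ℤ, fourierCoeff (⇑H2) i = fourierCoeff (⇑H) i :=
      fun i => fourierCoeff_toLp H i
    have hsum : Summable (fun i : ℤ => ‖fourierCoeff (⇑H) i‖ ^ 2) := by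
      have hm : Memℓp (⇑(fourierBasis.repr H2)) 2 := lp.memℓp _
      have hs := (memℓp_gen_iff (by norm_num : (0:ℝ) < (2 : ENNReal).toReal)).1 hm
      have h2 : ((2 : ENNReal).toReal) = (2 : ℝ) := by norm_num
      rw [h2] at hs
      have heq' : (fun i : ℤ => ‖(fourierBasis.repr H2) i‖ ^ (2:ℝ))
          = fun i : ℤ => ‖fourierCoeff (⇑H) i‖ ^ 2 := by
        funext i
        rw [fourierBasis_repr, hco i, ← Real.rpow_natCast ‖fourierCoeff (⇑H) i‖ 2]
        norm_num
      rwa [heq'] at hs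
    have heq : (∑' i : ℤ, ‖fourierCoeff (⇑H) i‖ ^ 2)
        = ∫ z : AddCircle T, ‖H z‖ ^ 2 ∂AddCircle.haarAddCircle := by
      have hP := tsum_sq_fourierCoeff H2
      simp_rw [hco] at hP
      rw [hP]
      apply MeasureTheory.integral_congr_ae
      filter_upwards [ContinuousMap.coeFn_toLp (p := 2) AddCircle.haarAddCircle (𝕜 := ℂ) H]
        with z hz
      rw [hz]
    exact ⟨heq, hsum⟩
  have hsum_le : (∑' i : ℤ, ‖fourierCoeff (⇑Fc) i‖ ^ 2)
      ≤ (T / (2 * π)) ^ 2 * ∑' i : ℤ, ‖fourierCoeff (⇑Gc) i‖ ^ 2 := by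
    rw [← tsum_mul_left]
    exact Summable.tsum_le_tsum hcoeff (key2 Fc).2 ((key2 Gc).2.mul_left _)
  -- converting circle integrals to interval integrals
  have hconv : ∀ (H : C(AddCircle T, ℂ)) (h : ℝ → ℂ), (∀ t : ℝ, H ↑t = h t) →
      ∫ t in (0:ℝ)..T, ‖h t‖ ^ 2
        = T * ∫ z : AddCircle T, ‖H z‖ ^ 2 ∂AddCircle.haarAddCircle := by
    intro H h hH
    have h0 := AddCircle.intervalIntegral_preimage T 0 (fun z => ‖H z‖ ^ 2)
    rw [zero_add] at h0
    rw [intervalIntegral.integral_congr (g := fun t : ℝ => ‖H ↑t‖ ^ 2)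
      (fun t _ => by simp [hH t]), h0, AddCircle.volume_eq_smul_haarAddCircle,
      MeasureTheory.integral_smul_measure, ENNReal.toReal_ofReal hT.le, smul_eq_mul]
  calc ∫ t in (0:ℝ)..T, ‖f t‖ ^ 2
      = T * ∫ z : AddCircle T, ‖Fc z‖ ^ 2 ∂AddCircle.haarAddCircle := hconv Fc f hFcoe
    _ = T * ∑' i : ℤ, ‖fourierCoeff (⇑Fc) i‖ ^ 2 := by rw [(key2 Fc).1]
    _ ≤ T * ((T / (2 * π)) ^ 2 * ∑' i : ℤ, ‖fourierCoeff (⇑Gc) i‖ ^ 2) :=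
        mul_le_mul_of_nonneg_left hsum_le hT.le
    _ = (T / (2 * π)) ^ 2 * (T * ∑' i : ℤ, ‖fourierCoeff (⇑Gc) i‖ ^ 2) := by ring
    _ = (T / (2 * π)) ^ 2 * ∫ t in (0:ℝ)..T, ‖g t‖ ^ 2 := by
        rw [(key2 Gc).1, ← hconv Gc g hGcoe]

theorem period_bounding_lemma {n : ℕ} {Ω : Set (EuclideanSpace ℝ (Fin n))} (hΩ : IsOpen Ω)
    {F : EuclideanSpace ℝ (Fin n) → EuclideanSpace ℝ (Fin n)} {L : ℝ} (hL : 0 < L)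
    (hLip : ∀ p ∈ Ω, ∀ q ∈ Ω, ‖F p - F q‖ ≤ L * ‖p - q‖)
    {x : ℝ → EuclideanSpace ℝ (Fin n)} (hx : ∀ t, x t ∈ Ω)
    (hode : ∀ t, HasDerivAt x (F (x t)) t)
    {T : ℝ} (hT : 0 < T) (hper : ∀ t, x (t + T) = x t)
    (hnc : ¬ ∀ s t, x s = x t) :
    2 * π / L ≤ T := by
  have hπ := Real.pi_pos
  have hxc : Continuous x := continuous_iff_continuousAt.2 fun t => (hode t).continuousAt
  set v : ℝ → EuclideanSpace ℝ (Fin n) := fun t => F (x t) with hv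
  have hvlip : ∀ s t : ℝ, ‖v t - v s‖ ≤ L * ‖x t - x s‖ := fun s t => hLip _ (hx t) _ (hx s)
  have hvc : Continuous v := by
    rw [Metric.continuous_iff]
    intro b ε hε
    obtain ⟨δ, hδ, hδ'⟩ := Metric.continuous_iff.1 hxc b (ε / L) (by positivity)
    refine ⟨δ, hδ, fun a ha => ?_⟩
    have h2 := hδ' a ha
    rw [dist_eq_norm] at h2 ⊢
    calc ‖v a - v b‖ ≤ L * ‖x a - x b‖ := hvlip b a
      _ < L * (ε / L) := by exact mul_lt_mul_of_pos_left h2 hL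
      _ = ε := by field_simp
  have hvper : ∀ t, v (t + T) = v t := fun t => by simp only [hv, hper t]
  -- the integral of v over a period vanishes
  have hIv0 : (∫ t in (0:ℝ)..T, v t) = 0 := by
    rw [intervalIntegral.integral_eq_sub_of_hasDerivAt (fun t _ => hode t)
      (hvc.intervalIntegrable 0 T)]
    have := hper 0
    rw [zero_add] at this
    rw [this, sub_self]
  set Ixv : EuclideanSpace ℝ (Fin n) := ∫ t in (0:ℝ)..T, x t with hIxv
  set xbar : EuclideanSpace ℝ (Fin n) := T⁻¹ • Ixv with hxbar
  have hIxv_eq : Ixv = T • xbar := by rw [hxbar, smul_inv_smul₀ hT.ne']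
  set Iv : ℝ := ∫ t in (0:ℝ)..T, ‖v t‖ ^ 2 with hIv
  set Ix2 : ℝ := ∫ t in (0:ℝ)..T, ‖x t‖ ^ 2 with hIx2
  set Iu : ℝ := ∫ t in (0:ℝ)..T, ‖x t - xbar‖ ^ 2 with hIu
  -- quadratic expansions
  have expand : ∀ (y : ℝ → EuclideanSpace ℝ (Fin n)), Continuous y → ∀ c,
      ∫ t in (0:ℝ)..T, ‖y t - c‖ ^ 2
        = (∫ t in (0:ℝ)..T, ‖y t‖ ^ 2) - 2 * ⟪c, (∫ t in (0:ℝ)..T, y t)⟫_ℝ + T * ‖c‖ ^ 2 := by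
    intro y hyc c
    have h1 : ∀ t : ℝ, ‖y t - c‖ ^ 2 = ‖y t‖ ^ 2 - 2 * ⟪c, y t⟫_ℝ + ‖c‖ ^ 2 := by
      intro t
      rw [norm_sub_sq_real, real_inner_comm]
    rw [intervalIntegral.integral_congr (g := fun t => ‖y t‖ ^ 2 - 2 * ⟪c, y t⟫_ℝ + ‖c‖ ^ 2)
      (fun t _ => h1 t)]
    have hi1 : IntervalIntegrable (fun t => ‖y t‖ ^ 2) MeasureTheory.volume 0 T :=
      ((hyc.norm.pow 2)).intervalIntegrable 0 T
    have hinnc : Continuous (fun t => ⟪c, y t⟫_ℝ) := continuous_const.inner hyc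
    have hi2 : IntervalIntegrable (fun t => 2 * ⟪c, y t⟫_ℝ) MeasureTheory.volume 0 T :=
      (continuous_const.mul hinnc).intervalIntegrable 0 T
    rw [intervalIntegral.integral_add (hi1.sub hi2) (intervalIntegrable_const),
      intervalIntegral.integral_sub hi1 hi2, intervalIntegral.integral_const_mul,
      intervalIntegral.integral_const, sub_zero, smul_eq_mul]
    congr 2
    have h3 := (innerSL ℝ c).intervalIntegral_comp_comm (hyc.intervalIntegrable (μ := MeasureTheory.volume) 0 T)
    simpa using h3
  have expand_v : ∀ c, ∫ t in (0:ℝ)..T, ‖v t - c‖ ^ 2 = Iv + T * ‖c‖ ^ 2 := by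
    intro c
    rw [expand v hvc c, hIv0, inner_zero_right, mul_zero, sub_zero]
  have hinner_xbar : ∀ c, ⟪c, Ixv⟫_ℝ = T * ⟪c, xbar⟫_ℝ := by
    intro c
    rw [hIxv_eq, real_inner_smul_right]
  have hIu_eq : Iu = Ix2 - T * ‖xbar‖ ^ 2 := by
    rw [hIu, expand x hxc xbar, ← hIxv, hinner_xbar, real_inner_self_eq_norm_sq]
    ring
  have hB : ∀ s : ℝ, ∫ t in (0:ℝ)..T, ‖x t - x s‖ ^ 2 = Iu + T * ‖x s - xbar‖ ^ 2 := by
    intro s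
    rw [expand x hxc (x s), ← hIxv, hinner_xbar, hIu_eq, norm_sub_sq_real]
    ring
  -- the Lipschitz comparison, integrated twice
  have hpoint : ∀ s : ℝ, Iv + T * ‖v s‖ ^ 2 ≤ L ^ 2 * (Iu + T * ‖x s - xbar‖ ^ 2) := by
    intro s
    rw [← expand_v (v s), ← hB s]
    calc (∫ t in (0:ℝ)..T, ‖v t - v s‖ ^ 2)
        ≤ ∫ t in (0:ℝ)..T, L ^ 2 * ‖x t - x s‖ ^ 2 := by
          apply intervalIntegral.integral_mono_on hT.le
            (((hvc.sub continuous_const).norm.pow 2).intervalIntegrable 0 T)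
            ((continuous_const.mul (((hxc.sub continuous_const).norm.pow 2))).intervalIntegrable 0 T)
          intro t ht
          have h1 : ‖v t - v s‖ ^ 2 ≤ (L * ‖x t - x s‖) ^ 2 :=
            pow_le_pow_left₀ (norm_nonneg _) (hvlip s t) 2
          calc ‖v t - v s‖ ^ 2 ≤ (L * ‖x t - x s‖) ^ 2 := h1
            _ = L ^ 2 * ‖x t - x s‖ ^ 2 := by ring
      _ = L ^ 2 * ∫ t in (0:ℝ)..T, ‖x t - x s‖ ^ 2 := intervalIntegral.integral_const_mul _ _
  have hIvIu : Iv ≤ L ^ 2 * Iu := by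
    have h2 : (∫ s in (0:ℝ)..T, (Iv + T * ‖v s‖ ^ 2))
        ≤ ∫ s in (0:ℝ)..T, L ^ 2 * (Iu + T * ‖x s - xbar‖ ^ 2) :=
      intervalIntegral.integral_mono_on (μ := MeasureTheory.volume) hT.le
      ((continuous_const.add (continuous_const.mul (hvc.norm.pow 2))).intervalIntegrable 0 T)
      ((continuous_const.mul (continuous_const.add (continuous_const.mul
        (((hxc.sub continuous_const).norm.pow 2))))).intervalIntegrable 0 T)
      (fun s _ => hpoint s)
    have hlhs : (∫ s in (0:ℝ)..T, (Iv + T * ‖v s‖ ^ 2)) = T * Iv + T * Iv := by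
      rw [intervalIntegral.integral_add (g := fun s => T * ‖v s‖ ^ 2) (intervalIntegrable_const)
        ((continuous_const.mul (hvc.norm.pow 2)).intervalIntegrable 0 T),
        intervalIntegral.integral_const, intervalIntegral.integral_const_mul,
        smul_eq_mul, sub_zero, ← hIv]
    have hrhs : (∫ s in (0:ℝ)..T, L ^ 2 * (Iu + T * ‖x s - xbar‖ ^ 2))
        = L ^ 2 * (T * Iu + T * Iu) := by
      rw [intervalIntegral.integral_const_mul]
      congr 1
      rw [intervalIntegral.integral_add (g := fun s => T * ‖x s - xbar‖ ^ 2) (intervalIntegrable_const)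
        ((continuous_const.mul ((hxc.sub continuous_const).norm.pow 2)).intervalIntegrable 0 T),
        intervalIntegral.integral_const, intervalIntegral.integral_const_mul,
        smul_eq_mul, sub_zero, ← hIu]
    rw [hlhs, hrhs] at h2
    nlinarith [hT]
  -- componentwise Wirtinger inequality
  have hnormsq : ∀ w : EuclideanSpace ℝ (Fin n), ‖w‖ ^ 2 = ∑ j : Fin n, (w j) ^ 2 := by
    intro w
    rw [EuclideanSpace.norm_eq, Real.sq_sqrt (by positivity)]
    simp [Real.norm_eq_abs, sq_abs]
  have hxj : ∀ j : Fin n, Continuous fun t => x t j :=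
    fun j => (EuclideanSpace.proj (𝕜 := ℝ) j).continuous.comp hxc
  have hvj : ∀ j : Fin n, Continuous fun t => v t j :=
    fun j => (EuclideanSpace.proj (𝕜 := ℝ) j).continuous.comp hvc
  have hWx : Iu ≤ (T / (2 * π)) ^ 2 * Iv := by
    have hj : ∀ j : Fin n, (∫ t in (0:ℝ)..T, (x t j - xbar j) ^ 2)
        ≤ (T / (2 * π)) ^ 2 * ∫ t in (0:ℝ)..T, (v t j) ^ 2 := by
      intro j
      set fj : ℝ → ℂ := fun t => ((x t j : ℝ) : ℂ) - ((xbar j : ℝ) : ℂ) with hfj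
      set gj : ℝ → ℂ := fun t => ((v t j : ℝ) : ℂ) with hgj
      have hderj : ∀ t, HasDerivAt fj (gj t) t := by
        intro t
        have h1 : HasDerivAt (fun s => x s j) (v t j) t :=
          (EuclideanSpace.proj (𝕜 := ℝ) j).hasFDerivAt.comp_hasDerivAt t (hode t)
        exact (h1.ofReal_comp).sub_const _
      have hgjc : Continuous gj := Complex.continuous_ofReal.comp (hvj j)
      have hperj : ∀ t, fj (t + T) = fj t := by
        intro t
        simp only [hfj, hper t]
      have hmeanj : (∫ t in (0:ℝ)..T, fj t) = 0 := by
        have hsplit : (∫ t in (0:ℝ)..T, fj t)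
            = (∫ t in (0:ℝ)..T, ((x t j : ℝ) : ℂ)) - ∫ _t in (0:ℝ)..T, ((xbar j : ℝ) : ℂ) :=
          intervalIntegral.integral_sub
            ((Complex.continuous_ofReal.comp (hxj j)).intervalIntegrable 0 T)
            intervalIntegrable_const
        rw [hsplit, intervalIntegral.integral_ofReal, intervalIntegral.integral_const]
        have hproj : (∫ t in (0:ℝ)..T, x t j) = Ixv j := by
          have h5 := (EuclideanSpace.proj (𝕜 := ℝ) j).intervalIntegral_comp_comm
            (hxc.intervalIntegrable (μ := MeasureTheory.volume) 0 T)
          simpa using h5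
        have hxbarj : xbar j = T⁻¹ * Ixv j := by
          rw [hxbar]
          simp [smul_eq_mul]
        rw [hproj, hxbarj, Complex.real_smul]
        push_cast
        have hTc : (T:ℂ) ≠ 0 := Complex.ofReal_ne_zero.mpr hT.ne'
        field_simp
        ring
      have W := wirtinger_scalar hT hderj hgjc hperj hmeanj
      have hfr : ∀ t : ℝ, ‖fj t‖ ^ 2 = (x t j - xbar j) ^ 2 := by
        intro t
        simp only [hfj]
        rw [← Complex.ofReal_sub, Complex.norm_real, Real.norm_eq_abs, sq_abs]
      have hgr : ∀ t : ℝ, ‖gj t‖ ^ 2 = (v t j) ^ 2 := by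
        intro t
        simp only [hgj]
        rw [Complex.norm_real, Real.norm_eq_abs, sq_abs]
      rw [intervalIntegral.integral_congr (g := fun t => ‖fj t‖ ^ 2) (fun t _ => (hfr t).symm),
          intervalIntegral.integral_congr (g := fun t => ‖gj t‖ ^ 2) (fun t _ => (hgr t).symm)]
      exact W
    have hIu_sum : Iu = ∑ j : Fin n, ∫ t in (0:ℝ)..T, (x t j - xbar j) ^ 2 := by
      rw [hIu, intervalIntegral.integral_congr
        (g := fun t => ∑ j : Fin n, (x t j - xbar j) ^ 2) (fun t _ => by
          rw [hnormsq (x t - xbar)]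
          exact Finset.sum_congr rfl fun j _ => by simp [PiLp.sub_apply])]
      rw [intervalIntegral.integral_finset_sum]
      intro j _
      exact (((hxj j).sub continuous_const).pow 2).intervalIntegrable 0 T
    have hIv_sum : Iv = ∑ j : Fin n, ∫ t in (0:ℝ)..T, (v t j) ^ 2 := by
      rw [hIv, intervalIntegral.integral_congr
        (g := fun t => ∑ j : Fin n, (v t j) ^ 2) (fun t _ => hnormsq (v t))]
      rw [intervalIntegral.integral_finset_sum]
      intro j _
      exact ((hvj j).pow 2).intervalIntegrable 0 T
    calc Iu = ∑ j : Fin n, ∫ t in (0:ℝ)..T, (x t j - xbar j) ^ 2 := hIu_sum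
      _ ≤ ∑ j : Fin n, (T / (2 * π)) ^ 2 * ∫ t in (0:ℝ)..T, (v t j) ^ 2 :=
          Finset.sum_le_sum fun j _ => hj j
      _ = (T / (2 * π)) ^ 2 * ∑ j : Fin n, ∫ t in (0:ℝ)..T, (v t j) ^ 2 := by
          rw [Finset.mul_sum]
      _ = (T / (2 * π)) ^ 2 * Iv := by rw [← hIv_sum]
  -- Iv is positive since x is not constant
  have hvne : ∃ t, v t ≠ 0 := by
    by_contra h
    push_neg at h
    apply hnc
    intro s t
    apply is_const_of_fderiv_eq_zero (𝕜 := ℝ) (fun r => (hode r).differentiableAt)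
    intro r
    have h1 : HasFDerivAt x (0 : ℝ →L[ℝ] EuclideanSpace ℝ (Fin n)) r := by
      have h2 := (hode r).hasFDerivAt
      rw [show F (x r) = v r from rfl, h r] at h2
      rw [ContinuousLinearMap.toSpanSingleton_zero] at h2
      exact h2
    exact h1.fderiv
  obtain ⟨t1, ht1⟩ := hvne
  have hvperF : Function.Periodic v T := hvper
  obtain ⟨t0, ht0, hveq⟩ := hvperF.exists_mem_Ico₀ hT t1
  have hIvpos : 0 < Iv := by
    rw [hIv]
    apply intervalIntegral.integral_pos hT ((hvc.norm.pow 2)).continuousOn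
      (fun s _ => by show 0 ≤ ‖v s‖ ^ 2; positivity)
    refine ⟨t0, ⟨ht0.1, ht0.2.le⟩, ?_⟩
    have hne : v t0 ≠ 0 := by rw [← hveq]; exact ht1
    have := norm_pos_iff.2 hne
    show 0 < ‖v t0‖ ^ 2
    positivity
  -- put everything together
  have hchain : Iv ≤ L ^ 2 * ((T / (2 * π)) ^ 2 * Iv) :=
    le_trans hIvIu (mul_le_mul_of_nonneg_left hWx (sq_nonneg L))
  have hone : 1 ≤ L ^ 2 * (T / (2 * π)) ^ 2 := by
    have h1 : 1 * Iv ≤ (L ^ 2 * (T / (2 * π)) ^ 2) * Iv := by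
      rw [one_mul]
      calc Iv ≤ L ^ 2 * ((T / (2 * π)) ^ 2 * Iv) := hchain
        _ = (L ^ 2 * (T / (2 * π)) ^ 2) * Iv := by ring
    exact le_of_mul_le_mul_right h1 hIvpos
  have hsq : (2 * π) ^ 2 ≤ (L * T) ^ 2 := by
    have h2 : L ^ 2 * (T / (2 * π)) ^ 2 = (L * T) ^ 2 / (2 * π) ^ 2 := by
      field_simp
    rw [h2] at hone
    have h3 : (0:ℝ) < (2 * π) ^ 2 := by positivity
    calc (2 * π) ^ 2 = 1 * (2 * π) ^ 2 := (one_mul _).symm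
      _ ≤ ((L * T) ^ 2 / (2 * π) ^ 2) * (2 * π) ^ 2 := by
          exact mul_le_mul_of_nonneg_right hone h3.le
      _ = (L * T) ^ 2 := by field_simp
  rw [div_le_iff₀ hL]
  nlinarith [mul_pos hL hT, hπ, hsq]
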